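/- Let A, B be linearly independent vectors in ℝ², let a, b, c, d be integers with a·d − b·c ≠ 0, and set C = a•A + b•B and D = c•A + d•B. Let H be the additive subgroup of ℝ² generated by {A, B} and K the additive subgroup generated by {C, D}. Then K ≤ H, and the index of K in H (the relative index) equals |a·d − b·c|. -/

import Mathlib

lemma aux_index_det {ι M : Type*} [Fintype ι] [DecidableEq ι] [AddCommGroup M] [Module ℤ M]
    (bM : Module.Basis ι ℤ M) (v : ι → M) (hv : LinearIndependent ℤ v) :
    (Submodule.span ℤ (Set.range v)).toAddSubgroup.index = (bM.det v).natAbs := by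
  set N : Submodule ℤ M := Submodule.span ℤ (Set.range v) with hN
  letI : Module ℤ ↥N := N.module
  let bN := Module.Basis.span hv
  have hvN : ((↑) ∘ bN : ι → M) = v := funext fun i => congrArg Subtype.val (Module.Basis.span_apply hv i)
  obtain ⟨n, snf⟩ := N.smithNormalForm bM
  have hn : n = Fintype.card ι := by
    have e := Module.Basis.indexEquiv snf.bN bN
    simpa using Fintype.card_congr e
  have hcard : Fintype.card (Fin n) = Fintype.card ι := by simp [hn]
  have hfbij : Function.Bijective snf.f :=
    (Fintype.bijective_iff_injective_and_card snf.f).2 ⟨snf.f.injective, hcard⟩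
  let g : Fin n ≃ ι := Equiv.ofBijective snf.f hfbij
  -- index side
  have hidx : N.toAddSubgroup.index = ∏ i : Fin n, (snf.a i).natAbs := by
    rw [snf.toAddSubgroup_index_eq_ite, if_pos hn]
    refine Finset.prod_congr rfl fun i _ => ?_
    rw [Ideal.span_singleton_toAddSubgroup_eq_zmultiples, Int.index_zmultiples]
  -- det side
  have h1 : bM.det ((↑) ∘ bN) = LinearMap.det (N.subtype ∘ₗ
      (bM.equiv bN (Equiv.refl ι)).toLinearMap) := Module.Basis.det_comp_basis bN bM N.subtype
  set e' := snf.bM.equiv (snf.bN.reindex g) (Equiv.refl ι) with he'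
  have h2 : Associated (LinearMap.det (N.subtype ∘ₗ (bM.equiv bN (Equiv.refl ι)).toLinearMap))
      (LinearMap.det (N.subtype ∘ₗ (e' : M →ₗ[ℤ] N))) :=
    LinearMap.associated_det_comp_equiv _ _ _
  have h3 : LinearMap.det (N.subtype ∘ₗ (e' : M →ₗ[ℤ] N)) = ∏ i : Fin n, snf.a i := by
    set f' := N.subtype ∘ₗ (e' : M →ₗ[ℤ] N) with hf'
    have hfb : ∀ i : ι, f' (snf.bM i) = snf.a (g.symm i) • snf.bM i := by
      intro i
      have h : f' (snf.bM i) = ((snf.bN.reindex g) i : M) := by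
        simp [hf', he', Module.Basis.equiv_apply]
      rw [h, Module.Basis.reindex_apply, snf.snf]
      have hgi : snf.f (g.symm i) = i := g.apply_symm_apply i
      rw [hgi]
      exact int_smul_eq_zsmul _ _ _
    have hmat : LinearMap.toMatrix snf.bM snf.bM f'
        = Matrix.diagonal (fun i => snf.a (g.symm i)) := by
      ext i j
      rw [LinearMap.toMatrix_apply, hfb, map_zsmul, Module.Basis.repr_self]
      by_cases h : i = j
      · subst h; simp [Finsupp.smul_apply, Finsupp.single_apply]
      · simp [Matrix.diagonal_apply_ne _ h, Finsupp.smul_apply, Finsupp.single_apply, Ne.symm h]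
    calc LinearMap.det f' = (LinearMap.toMatrix snf.bM snf.bM f').det :=
          (LinearMap.det_toMatrix _ _).symm
      _ = ∏ i : ι, snf.a (g.symm i) := by rw [hmat, Matrix.det_diagonal]
      _ = ∏ i : Fin n, snf.a i := Equiv.prod_comp g.symm _
  rw [hidx, ← hvN, h1, Int.natAbs_eq_iff_associated.mpr h2, h3]
  exact (map_prod Int.natAbsHom _ Finset.univ).symm

/-- Remark 1: the lattice `K = ⟨C, D⟩` is contained in `H = ⟨A, B⟩` and its index
in `H` equals `|ad - bc|`. -/
theorem stmt10 (A B : ℝ × ℝ) (hAB : LinearIndependent ℝ ![A, B])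
    (a b c d : ℤ) (hdet : a * d - b * c ≠ 0)
    (C D : ℝ × ℝ) (hC : C = a • A + b • B) (hD : D = c • A + d • B)
    (H K : AddSubgroup (ℝ × ℝ))
    (hH : H = AddSubgroup.closure ({A, B} : Set (ℝ × ℝ)))
    (hK : K = AddSubgroup.closure ({C, D} : Set (ℝ × ℝ))) :
    K ≤ H ∧ K.relIndex H = (a * d - b * c).natAbs := by
  classical
  -- the homomorphism ℤ² → ℝ²
  set ψ : ℤ × ℤ →+ ℝ × ℝ := AddMonoidHom.mk' (fun p => p.1 • A + p.2 • B) (by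
    intro p q
    simp only [Prod.fst_add, Prod.snd_add, add_zsmul]
    abel) with hψ
  have hψ_apply : ∀ p : ℤ × ℤ, ψ p = p.1 • A + p.2 • B := fun p => rfl
  -- injectivity
  have hker : ∀ p : ℤ × ℤ, ψ p = 0 → p = 0 := by
    intro p hp
    rw [hψ_apply] at hp
    have h2 := Fintype.linearIndependent_iff.mp hAB ![(p.1 : ℝ), (p.2 : ℝ)] (by
      rw [Fin.sum_univ_two]
      simpa [Int.cast_smul_eq_zsmul] using hp)
    have h0 : (p.1 : ℝ) = 0 := h2 0
    have h1 : (p.2 : ℝ) = 0 := h2 1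
    have : p.1 = 0 := by exact_mod_cast h0
    have : p.2 = 0 := by exact_mod_cast h1
    ext <;> simp_all
  have hinj : Function.Injective ψ := by
    rw [injective_iff_map_eq_zero ψ]
    exact fun p hp => hker p hp
  -- K and H as images
  set v : Fin 2 → ℤ × ℤ := ![(a, b), (c, d)] with hv
  have hψab : ψ (a, b) = C := by rw [hψ_apply]; exact hC.symm
  have hψcd : ψ (c, d) = D := by rw [hψ_apply]; exact hD.symm
  have hψ10 : ψ (1, 0) = A := by rw [hψ_apply]; simp
  have hψ01 : ψ (0, 1) = B := by rw [hψ_apply]; simp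
  set K' : AddSubgroup (ℤ × ℤ) := AddSubgroup.closure {(a, b), (c, d)} with hK'
  have hKmap : K = AddSubgroup.map ψ K' := by
    rw [hK, hK', AddMonoidHom.map_closure, Set.image_insert_eq, Set.image_singleton,
      hψab, hψcd]
  have htop : (AddSubgroup.closure {((1 : ℤ), (0 : ℤ)), ((0 : ℤ), (1 : ℤ))} :
      AddSubgroup (ℤ × ℤ)) = ⊤ := by
    rw [eq_top_iff]
    intro p _
    have hp : p = p.1 • ((1 : ℤ), (0 : ℤ)) + p.2 • ((0 : ℤ), (1 : ℤ)) := by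
      ext <;> simp
    rw [hp]
    exact add_mem
      (AddSubgroup.zsmul_mem _ (AddSubgroup.subset_closure (by simp)) _)
      (AddSubgroup.zsmul_mem _ (AddSubgroup.subset_closure (by simp)) _)
  have hHmap : H = AddSubgroup.map ψ ⊤ := by
    rw [hH, ← htop, AddMonoidHom.map_closure, Set.image_insert_eq, Set.image_singleton,
      hψ10, hψ01]
  constructor
  · rw [hKmap, hHmap]
    exact AddSubgroup.map_mono le_top
  · -- index computation
    have hcomap : K.comap ψ = K' := by
      rw [hKmap]
      exact AddSubgroup.comap_map_eq_self_of_injective hinj K'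
    have h1 : K.relIndex H = K'.index := by
      rw [hHmap, ← AddSubgroup.relIndex_comap, hcomap, AddSubgroup.relIndex_top_right]
    -- linear independence of v over ℤ
    have hvli : LinearIndependent ℤ v := by
      rw [hv, LinearIndependent.pair_iff]
      intro s t hst
      have h1 : s * a + t * c = 0 := congrArg Prod.fst hst
      have h2 : s * b + t * d = 0 := congrArg Prod.snd hst
      constructor
      · have : s * (a * d - b * c) = 0 := by linear_combination d * h1 - c * h2
        rcases mul_eq_zero.mp this with h | h
        · exact h
        · exact absurd h hdet
      · have : t * (a * d - b * c) = 0 := by linear_combination -b * h1 + a * h2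
        rcases mul_eq_zero.mp this with h | h
        · exact h
        · exact absurd h hdet
    have hrange : Set.range v = {(a, b), (c, d)} := by
      rw [hv]
      ext x
      simp [Fin.exists_fin_two]
      tauto
    have hK'span : K' = (Submodule.span ℤ (Set.range v)).toAddSubgroup := by
      rw [Submodule.span_int_eq_addSubgroupClosure, hrange, hK']
    have hdetcalc : ((Module.Basis.finTwoProd ℤ).det v).natAbs = (a * d - b * c).natAbs := by
      rw [Module.Basis.det_apply]
      have : (Module.Basis.finTwoProd ℤ).toMatrix v = !![a, c; b, d] := by
        ext i j
        fin_cases i <;> fin_cases j <;>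
          simp [Module.Basis.toMatrix_apply, hv]
      rw [this, Matrix.det_fin_two_of]
      congr 1
      ring
    rw [h1, hK'span, aux_index_det (Module.Basis.finTwoProd ℤ) v hvli, hdetcalc]
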